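/- Let $k$ be a field and $A$ a Hopf algebra over $k$ with comultiplication $\overline{m} : A \to A \otimes_k A$. Let $\{I_i \mid i \in \Lambda\}$ be a downward directed family of Hopf ideals of $A$ (so each $I_i$ satisfies $\overline{m}(I_i) \subseteq A \otimes_k I_i + I_i \otimes_k A$), and let $I = \bigcap_{i \in \Lambda} I_i$. Then $\overline{m}(I) \subseteq A \otimes_k I + I \otimes_k A$, i.e. the comultiplication descends to a well-defined map $A/I \to A/I \otimes_k A/I$. -/

import Mathlib

open TensorProduct

/-- The image of `A ⊗[k] J` in `A ⊗[k] A`. -/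
noncomputable def tensorIdealRight (k A : Type) [Field k] [CommRing A] [Algebra k A]
    (J : Ideal A) : Submodule k (A ⊗[k] A) :=
  LinearMap.range (TensorProduct.map (LinearMap.id : A →ₗ[k] A)
    (J.restrictScalars k).subtype)

/-- The image of `J ⊗[k] A` in `A ⊗[k] A`. -/
noncomputable def tensorIdealLeft (k A : Type) [Field k] [CommRing A] [Algebra k A]
    (J : Ideal A) : Submodule k (A ⊗[k] A) :=
  LinearMap.range (TensorProduct.map (J.restrictScalars k).subtype
    (LinearMap.id : A →ₗ[k] A))

/-- The kernel of `mkQ ⊗ mkQ : M ⊗ M → M/J ⊗ M/J` is `M ⊗ J + J ⊗ M`. -/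
theorem aux_ker_mkQ {k M : Type} [Field k] [AddCommGroup M] [Module k M]
    (J : Submodule k M) :
    LinearMap.ker (TensorProduct.map J.mkQ J.mkQ) =
      LinearMap.range (TensorProduct.map (LinearMap.id : M →ₗ[k] M) J.subtype) ⊔
        LinearMap.range (TensorProduct.map J.subtype (LinearMap.id : M →ₗ[k] M)) := by
  have h := TensorProduct.map_ker (LinearMap.exact_subtype_mkQ J)
    (Submodule.mkQ_surjective J) (LinearMap.exact_subtype_mkQ J)
    (Submodule.mkQ_surjective J)
  rw [h]
  rfl

theorem comul_inter_hopfIdeal (k A : Type) [Field k] [CommRing A] [HopfAlgebra k A]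
    (Λ : Type) [PartialOrder Λ] [Nonempty Λ]
    (hdir : ∀ i j : Λ, ∃ l : Λ, l ≤ i ∧ l ≤ j)
    (I : Λ → Ideal A) (hmono : ∀ i j : Λ, i ≤ j → I i ≤ I j)
    (hcoideal : ∀ i : Λ, ∀ x ∈ I i,
      Coalgebra.comul (R := k) x ∈ tensorIdealRight k A (I i) ⊔ tensorIdealLeft k A (I i))
    (hcounit : ∀ i : Λ, ∀ x ∈ I i, Coalgebra.counit (R := k) x = 0)
    (hantipode : ∀ i : Λ, ∀ x ∈ I i, (HopfAlgebra.antipode (R := k) : A →ₗ[k] A) x ∈ I i) :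
    ∀ x ∈ (⨅ i, I i : Ideal A),
      Coalgebra.comul (R := k) x
        ∈ tensorIdealRight k A (⨅ i, I i) ⊔ tensorIdealLeft k A (⨅ i, I i) := by
  intro x hx
  set t := Coalgebra.comul (R := k) x with ht
  -- find a finite-dimensional subspace W with t in the image of W ⊗ W
  obtain ⟨M', N', hM', hN', hsub⟩ :=
    TensorProduct.exists_finite_submodule_of_setFinite {t} (Set.finite_singleton t)
  set W : Submodule k A := M' ⊔ N' with hW
  haveI : Module.Finite k W := Submodule.finite_sup M' N'
  have htW : t ∈ LinearMap.range (TensorProduct.map W.subtype W.subtype) :=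
    TensorProduct.range_mapIncl_mono le_sup_left le_sup_right (hsub rfl)
  obtain ⟨s, hs⟩ := htW
  -- the directed family of finite-dimensional subspaces W ⊓ I i
  set K : Λ → Submodule k A := fun i => (I i).restrictScalars k ⊓ W with hKdef
  have hKW : ∀ i, K i ≤ W := fun i => inf_le_right
  haveI : ∀ i, FiniteDimensional k (K i) := fun i =>
    Submodule.finiteDimensional_of_le (hKW i)
  have hKmono : ∀ i j : Λ, i ≤ j → K i ≤ K j := fun i j hij =>
    inf_le_inf (fun y hy => hmono i j hij hy) le_rfl
  -- choose an index minimizing the dimension of W ⊓ I i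
  obtain ⟨i0, hi0⟩ := Nat.sInf_mem (Set.range_nonempty fun i => Module.finrank k (K i))
  have hKmin : ∀ j, K i0 ≤ K j := by
    intro j
    obtain ⟨l, hl1, hl2⟩ := hdir i0 j
    have h1 : K l ≤ K i0 := hKmono l i0 hl1
    have heq : K l = K i0 := Submodule.eq_of_le_of_finrank_le h1
      (le_trans (le_of_eq hi0) (Nat.sInf_le ⟨l, rfl⟩))
    rw [← heq]
    exact hKmono l j hl2
  have hKinf : ∀ y : A, y ∈ K i0 → y ∈ (⨅ i, I i : Ideal A) := by
    intro y hy
    rw [Submodule.mem_iInf]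
    intro j
    exact ((hKmin j) hy).1
  -- x belongs to I i0
  have hxi0 : x ∈ I i0 := (Submodule.mem_iInf I).mp hx i0
  set J : Submodule k A := (I i0).restrictScalars k with hJ
  set q : A →ₗ[k] A ⧸ J := J.mkQ with hq
  -- t is killed by q ⊗ q
  have hqq : TensorProduct.map q q t = 0 := by
    have hmem := hcoideal i0 x hxi0
    rw [show tensorIdealRight k A (I i0) ⊔ tensorIdealLeft k A (I i0)
        = LinearMap.ker (TensorProduct.map q q) by
      rw [aux_ker_mkQ J]; rfl] at hmem
    exact hmem
  -- hence s is killed by (q ∘ ι) ⊗ (q ∘ ι)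
  have hqs : TensorProduct.map (q ∘ₗ W.subtype) (q ∘ₗ W.subtype) s = 0 := by
    rw [TensorProduct.map_comp, LinearMap.comp_apply, hs, hqq]
  -- factor q ∘ ι through W ⧸ ker
  set Kk : Submodule k W := LinearMap.ker (q ∘ₗ W.subtype) with hKk
  set p : W →ₗ[k] W ⧸ Kk := Kk.mkQ with hp
  set e : (W ⧸ Kk) →ₗ[k] A ⧸ J := Kk.liftQ (q ∘ₗ W.subtype) le_rfl with he
  have hfac : q ∘ₗ W.subtype = e ∘ₗ p := (Submodule.liftQ_mkQ _ _ _).symm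
  have heinj : Function.Injective e := by
    rw [← LinearMap.ker_eq_bot]
    exact Submodule.ker_liftQ_eq_bot _ _ _ le_rfl
  have heeinj : Function.Injective (TensorProduct.map e e) := by
    rw [← LinearMap.lTensor_comp_rTensor, LinearMap.coe_comp]
    exact (Module.Flat.lTensor_preserves_injective_linearMap e heinj).comp
      (Module.Flat.rTensor_preserves_injective_linearMap e heinj)
  have hps : TensorProduct.map p p s = 0 := by
    apply heeinj
    rw [map_zero, ← LinearMap.comp_apply, ← TensorProduct.map_comp, ← hfac, hqs]
  -- so s lies in W ⊗ Kk + Kk ⊗ W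
  have hsmem : s ∈ LinearMap.range (TensorProduct.map (LinearMap.id : W →ₗ[k] W)
      Kk.subtype) ⊔ LinearMap.range (TensorProduct.map Kk.subtype
      (LinearMap.id : W →ₗ[k] W)) := by
    rw [← aux_ker_mkQ Kk]
    exact hps
  obtain ⟨u, hu, v, hv, huv⟩ := Submodule.mem_sup.mp hsmem
  -- elements of Kk map into the intersection ideal
  have hKkinf : ∀ z : Kk, ((z : W) : A) ∈ ((⨅ i, I i : Ideal A).restrictScalars k) := by
    intro z
    apply hKinf
    refine ⟨?_, (z : W).2⟩
    have hz : (q ∘ₗ W.subtype) (z : W) = 0 := z.2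
    rw [LinearMap.comp_apply] at hz
    simpa [hq, hJ, Submodule.Quotient.mk_eq_zero] using hz
  set h : Kk →ₗ[k] ((⨅ i, I i : Ideal A).restrictScalars k) :=
    LinearMap.codRestrict _ (W.subtype ∘ₗ Kk.subtype) hKkinf with hh
  have hcomp : W.subtype ∘ₗ Kk.subtype
      = ((⨅ i, I i : Ideal A).restrictScalars k).subtype ∘ₗ h := by
    ext z; rfl
  rw [← hs, ← huv, map_add]
  apply Submodule.add_mem_sup
  · -- right part
    obtain ⟨y, hy⟩ := hu
    rw [← hy, ← LinearMap.comp_apply, ← TensorProduct.map_comp]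
    have : W.subtype ∘ₗ (LinearMap.id : W →ₗ[k] W) = LinearMap.id ∘ₗ W.subtype := by
      ext; rfl
    rw [this, hcomp, TensorProduct.map_comp, LinearMap.comp_apply]
    exact ⟨_, rfl⟩
  · -- left part
    obtain ⟨y, hy⟩ := hv
    rw [← hy, ← LinearMap.comp_apply, ← TensorProduct.map_comp]
    have : W.subtype ∘ₗ (LinearMap.id : W →ₗ[k] W) = LinearMap.id ∘ₗ W.subtype := by
      ext; rfl
    rw [this, hcomp, TensorProduct.map_comp, LinearMap.comp_apply]
    exact ⟨_, rfl⟩
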